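/- Under Assumption (resetting comparison) below, the objective value after the Option B (no-resetting) update is at least that after the Option A (resetting) update: F(ŵ) ≥ F(w_A). -/

import Mathlib

/-- Generic quadratic lower bound from a derivative gap condition. -/
lemma quad_lower_aux (f : ℝ → ℝ) (hf : Differentiable ℝ f) (k x : ℝ)
    (h1 : ∀ z, x ≤ z → deriv f x + k * (z - x) ≤ deriv f z)
    (h2 : ∀ z, z ≤ x → deriv f z ≤ deriv f x + k * (z - x)) (y : ℝ) :
    f x + deriv f x * (y - x) + k / 2 * (y - x) ^ 2 ≤ f y := by
  set ψ : ℝ → ℝ := fun t => f t - f x - deriv f x * (t - x) - k / 2 * (t - x) ^ 2 with hψdef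
  have hd : ∀ z, HasDerivAt ψ (deriv f z - deriv f x - k * (z - x)) z := by
    intro z
    have h0 : HasDerivAt f (deriv f z) z := (hf z).hasDerivAt
    have hlin : HasDerivAt (fun t : ℝ => deriv f x * (t - x)) (deriv f x) z := by
      simpa using ((hasDerivAt_id z).sub_const x).const_mul (deriv f x)
    have hsq : HasDerivAt (fun t : ℝ => k / 2 * (t - x) ^ 2) (k * (z - x)) z := by
      have h := (((hasDerivAt_id z).sub_const x).pow 2).const_mul (k / 2)
      convert h using 1
      · rfl
      · rfl
      · rfl
      simp; ring
    exact ((h0.sub_const (f x)).sub hlin).sub hsq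
  have hψdiff : Differentiable ℝ ψ := fun z => (hd z).differentiableAt
  have hcont := hψdiff.continuous
  have hmono : MonotoneOn ψ (Set.Ici x) := by
    apply monotoneOn_of_deriv_nonneg (convex_Ici x) hcont.continuousOn
      hψdiff.differentiableOn
    intro z hz
    rw [interior_Ici] at hz
    rw [(hd z).deriv]
    have := h1 z (le_of_lt hz)
    linarith
  have hanti : AntitoneOn ψ (Set.Iic x) := by
    apply antitoneOn_of_deriv_nonpos (convex_Iic x) hcont.continuousOn
      hψdiff.differentiableOn
    intro z hz
    rw [interior_Iic] at hz
    rw [(hd z).deriv]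
    have := h2 z (le_of_lt hz)
    linarith
  have hx0 : ψ x = 0 := by simp [hψdef]
  have hy0 : 0 ≤ ψ y := by
    rcases le_total x y with h | h
    · have := hmono Set.self_mem_Ici h h
      linarith
    · have := hanti h Set.self_mem_Iic h
      linarith
  have heq : ψ y = f y - f x - deriv f x * (y - x) - k / 2 * (y - x) ^ 2 := rfl
  rw [heq] at hy0
  linarith

/-- Descent-type upper bound for a function with Lipschitz derivative. -/
lemma smooth_upper_aux (F : ℝ → ℝ) (L : ℝ) (hL : 0 ≤ L) (hF : Differentiable ℝ F)
    (hlip : ∀ a b : ℝ, |deriv F a - deriv F b| ≤ L * |a - b|) (x y : ℝ) :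
    F y ≤ F x + deriv F x * (y - x) + L / 2 * (y - x) ^ 2 := by
  have hdneg : ∀ z : ℝ, deriv (fun t => -F t) z = -deriv F z := by
    intro z
    exact deriv.neg
  have key := quad_lower_aux (fun t => -F t) hF.neg (-L) x ?_ ?_ y
  · rw [hdneg] at key
    linarith
  · intro z hz
    rw [hdneg, hdneg]
    have h := hlip z x
    rw [abs_of_nonneg (by linarith : (0:ℝ) ≤ z - x)] at h
    have := abs_le.mp h
    linarith [this.2]
  · intro z hz
    rw [hdneg, hdneg]
    have h := hlip z x
    rw [abs_of_nonpos (by linarith : z - x ≤ (0:ℝ))] at h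
    have := abs_le.mp h
    linarith [this.1]

/-- Strong convexity lower bound. -/
lemma strong_lower_aux (F : ℝ → ℝ) (c : ℝ) (hF : Differentiable ℝ F)
    (hsc : StrongConvexOn Set.univ c F) (x y : ℝ) :
    F x + deriv F x * (y - x) + c / 2 * (y - x) ^ 2 ≤ F y := by
  have hconv : ConvexOn ℝ Set.univ fun z : ℝ => F z - c / 2 * z ^ 2 := by
    have h := strongConvexOn_iff_convex.mp hsc
    convert h using 2 with z
    · rfl
    · rfl
    rw [Real.norm_eq_abs, sq_abs]
  have hq : Differentiable ℝ (fun z : ℝ => c / 2 * z ^ 2) := by fun_prop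
  have hdiffh : Differentiable ℝ (fun z : ℝ => F z - c / 2 * z ^ 2) := hF.sub hq
  have hderivh : ∀ z : ℝ, deriv (fun z : ℝ => F z - c / 2 * z ^ 2) z = deriv F z - c * z := by
    intro z
    have h2' : HasDerivAt (fun z : ℝ => c / 2 * z ^ 2) (c * z) z := by
      have h := (hasDerivAt_pow 2 z).const_mul (c / 2)
      convert h using 1
      · rfl
      · rfl
      simp; ring
    exact ((hF z).hasDerivAt.sub h2').deriv
  have hmono := hconv.monotoneOn_deriv (fun z _ => hdiffh z)
  apply quad_lower_aux F hF c x ?_ ?_ y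
  · intro z hz
    have := hmono (Set.mem_univ x) (Set.mem_univ z) hz
    rw [hderivh, hderivh] at this
    linarith
  · intro z hz
    have := hmono (Set.mem_univ z) (Set.mem_univ x) hz
    rw [hderivh, hderivh] at this
    linarith

lemma geom_reindex_aux (β : ℝ) (m : ℕ) :
    ∑ j ∈ Finset.Icc 1 m, β ^ (m - j) = ∑ k ∈ Finset.range m, β ^ k := by
  induction m with
  | zero => simp
  | succ n ih =>
    rw [Finset.sum_Icc_succ_top (by omega : 1 ≤ n + 1)]
    have h : ∑ j ∈ Finset.Icc 1 n, β ^ (n + 1 - j) = β * ∑ j ∈ Finset.Icc 1 n, β ^ (n - j) := by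
      rw [Finset.mul_sum]
      apply Finset.sum_congr rfl
      intro j hj
      have hj' : j ≤ n := (Finset.mem_Icc.mp hj).2
      rw [show n + 1 - j = (n - j) + 1 by omega, pow_succ]
      ring
    rw [h, ih, geom_sum_succ]
    simp

lemma final_algebra_aux (cc LL gg aa bb : ℝ) (hcc : 0 < cc) (hLL : cc < LL)
    (hgg : 0 ≤ gg) (haa : 0 ≤ aa) (hbb : 0 ≤ bb)
    (h1 : 2 * gg ≤ LL * aa) (h2 : LL * aa ≤ cc * bb) :
    LL / 2 * aa ^ 2 - gg * aa ≤ cc / 2 * bb ^ 2 - gg * bb := by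
  nlinarith [mul_nonneg (sub_nonneg.mpr h2) (by linarith : (0:ℝ) ≤ cc * bb + LL * aa - 2 * gg),
    mul_nonneg (mul_nonneg (by linarith : (0:ℝ) ≤ LL - cc) haa)
      (by linarith : (0:ℝ) ≤ LL * aa - 2 * gg)]

set_option maxHeartbeats 1600000 in
/-- Resetting comparison: for a `c`-strongly convex `F` with `L`-Lipschitz derivative,
under the assumptions (a) `|M| ≥ |F'(w)|`, (b) `Lα₂ ≥ 2√(G²+ε)`, and
(c) `L/c ≤ ((2β₁-1)/(1-β₁^{m+1}))√(ε/(G²+ε))`, the objective value after the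
no-resetting ADAM update (Option B) is at least that after the resetting update
(Option A): `F(ŵ) ≥ F(w_A)`. -/
theorem resetting_update_better (F : ℝ → ℝ) (c L : ℝ)
    (hc : 0 < c) (hcL : c < L)
    (hFdiff : Differentiable ℝ F)
    (hFsc : StrongConvexOn Set.univ c F)
    (hFlip : LipschitzWith (Real.toNNReal L) (deriv F))
    (β₁ β₂ ε α₂ G : ℝ) (m : ℕ)
    (hβ₁0 : 0 ≤ β₁) (hβ₁1 : β₁ < 1) (hβ₂0 : 0 ≤ β₂) (hβ₂1 : β₂ < 1)
    (hε : 0 < ε) (hα₂ : 0 < α₂) (hG : 0 < G)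
    (w : ℝ) (g : ℕ → ℝ)
    (hgbd : ∀ j ∈ Finset.Icc 1 m, |g j| ≤ G)
    (hgw : |deriv F w| ≤ G)
    (M V : ℝ)
    (hM : M = (1 - β₁) * ∑ j ∈ Finset.Icc 1 m, β₁ ^ (m - j) * g j)
    (hV : V = (1 - β₂) * ∑ j ∈ Finset.Icc 1 m, β₂ ^ (m - j) * (g j) ^ 2)
    (wA wB : ℝ)
    -- Option A (resetting) update
    (hwA : wA = w - α₂ * (deriv F w) / Real.sqrt ((deriv F w) ^ 2 + ε))
    -- Option B (no resetting) update
    (hwB : wB = w - α₂ * ((β₁ * M + (1 - β₁) * deriv F w) / (1 - β₁ ^ (m + 1))) /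
        Real.sqrt ((β₂ * V + (1 - β₂) * (deriv F w) ^ 2) / (1 - β₂ ^ (m + 1)) + ε))
    -- Assumption (a): progress in the first loop
    (hA : |deriv F w| ≤ |M|)
    -- Assumption (b)
    (hB : 2 * Real.sqrt (G ^ 2 + ε) ≤ L * α₂)
    -- Assumption (c)
    (hC : L / c ≤ ((2 * β₁ - 1) / (1 - β₁ ^ (m + 1))) * Real.sqrt (ε / (G ^ 2 + ε))) :
    F wA ≤ F wB := by
  set g0 := deriv F w with hg0
  have hL0 : (0:ℝ) < L := lt_trans hc hcL
  have hg2 : g0 ^ 2 ≤ G ^ 2 := sq_le_sq' (abs_le.mp hgw).1 (abs_le.mp hgw).2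
  have hGε : (0:ℝ) < G ^ 2 + ε := by positivity
  have hgε : (0:ℝ) < g0 ^ 2 + ε := by positivity
  set se := Real.sqrt ε with hse_def
  set sg := Real.sqrt (g0 ^ 2 + ε) with hsg_def
  set sG := Real.sqrt (G ^ 2 + ε) with hsG_def
  have hse : 0 < se := Real.sqrt_pos.mpr hε
  have hsg : 0 < sg := Real.sqrt_pos.mpr hgε
  have hsG : 0 < sG := Real.sqrt_pos.mpr hGε
  have hsesg : se ≤ sg := Real.sqrt_le_sqrt (by linarith [sq_nonneg g0])
  have hsgsG : sg ≤ sG := Real.sqrt_le_sqrt (by linarith)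
  set D1 := 1 - β₁ ^ (m + 1) with hD1_def
  set D2 := 1 - β₂ ^ (m + 1) with hD2_def
  have hD1 : 0 < D1 := by
    have h : β₁ ^ (m + 1) < 1 := pow_lt_one₀ hβ₁0 hβ₁1 (by omega)
    rw [hD1_def]; linarith
  have hD2 : 0 < D2 := by
    have h : β₂ ^ (m + 1) < 1 := pow_lt_one₀ hβ₂0 hβ₂1 (by omega)
    rw [hD2_def]; linarith
  have hsqdiv : Real.sqrt (ε / (G ^ 2 + ε)) = se / sG := by
    rw [hse_def, hsG_def, Real.sqrt_div hε.le]
  rw [hsqdiv] at hC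
  have hβhalf : 0 < 2 * β₁ - 1 := by
    by_contra hcon
    push_neg at hcon
    have h1 : (2 * β₁ - 1) / D1 ≤ 0 := div_nonpos_of_nonpos_of_nonneg hcon hD1.le
    have h2 : 0 ≤ se / sG := by positivity
    have h3 : (2 * β₁ - 1) / D1 * (se / sG) ≤ 0 := mul_nonpos_of_nonpos_of_nonneg h1 h2
    have h4 : 0 < L / c := div_pos hL0 hc
    linarith
  have hC' : L * (D1 * sG) ≤ (2 * β₁ - 1) * se * c := by
    have h5 : (2 * β₁ - 1) / D1 * (se / sG) = ((2 * β₁ - 1) * se) / (D1 * sG) := by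
      field_simp
    rw [h5] at hC
    exact (div_le_div_iff₀ hc (by positivity)).mp hC
  set mh := β₁ * M + (1 - β₁) * g0 with hmh_def
  have hmh : (2 * β₁ - 1) * |g0| ≤ |mh| := by
    have h1 : |β₁ * M| - |-((1 - β₁) * g0)| ≤ |β₁ * M + (1 - β₁) * g0| := by
      have h := abs_sub_abs_le_abs_sub (β₁ * M) (-((1 - β₁) * g0))
      simpa [sub_neg_eq_add] using h
    have h2 : |β₁ * M| = β₁ * |M| := by rw [abs_mul, abs_of_nonneg hβ₁0]
    have h3 : |-((1 - β₁) * g0)| = (1 - β₁) * |g0| := by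
      rw [abs_neg, abs_mul, abs_of_nonneg (by linarith : (0:ℝ) ≤ 1 - β₁)]
    have h4 : β₁ * |g0| ≤ β₁ * |M| := mul_le_mul_of_nonneg_left hA hβ₁0
    rw [hmh_def]
    rw [h2, h3] at h1
    linarith
  have hVnn : 0 ≤ V := by
    rw [hV]
    exact mul_nonneg (by linarith) (Finset.sum_nonneg (fun j _ => by positivity))
  have hVle : V ≤ (1 - β₂ ^ m) * G ^ 2 := by
    rw [hV]
    have hsum : ∑ j ∈ Finset.Icc 1 m, β₂ ^ (m - j) * (g j) ^ 2 ≤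
        G ^ 2 * ∑ j ∈ Finset.Icc 1 m, β₂ ^ (m - j) := by
      rw [Finset.mul_sum]
      apply Finset.sum_le_sum
      intro j hj
      have h2 : (g j) ^ 2 ≤ G ^ 2 := sq_le_sq' (abs_le.mp (hgbd j hj)).1 (abs_le.mp (hgbd j hj)).2
      have h3 : (0:ℝ) ≤ β₂ ^ (m - j) := by positivity
      calc β₂ ^ (m - j) * (g j) ^ 2 ≤ β₂ ^ (m - j) * G ^ 2 :=
            mul_le_mul_of_nonneg_left h2 h3
        _ = G ^ 2 * β₂ ^ (m - j) := mul_comm _ _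
    have hgeo := geom_sum_mul β₂ m
    have hre := geom_reindex_aux β₂ m
    calc (1 - β₂) * ∑ j ∈ Finset.Icc 1 m, β₂ ^ (m - j) * (g j) ^ 2
        ≤ (1 - β₂) * (G ^ 2 * ∑ j ∈ Finset.Icc 1 m, β₂ ^ (m - j)) :=
          mul_le_mul_of_nonneg_left hsum (by linarith)
      _ = (1 - β₂ ^ m) * G ^ 2 := by
          rw [hre]
          linear_combination (-G ^ 2) * hgeo
  have hvh_nn : 0 ≤ β₂ * V + (1 - β₂) * g0 ^ 2 :=
    add_nonneg (mul_nonneg hβ₂0 hVnn) (mul_nonneg (by linarith) (sq_nonneg g0))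
  have hvh_le : β₂ * V + (1 - β₂) * g0 ^ 2 ≤ D2 * G ^ 2 := by
    have h1 : β₂ * V ≤ β₂ * ((1 - β₂ ^ m) * G ^ 2) := mul_le_mul_of_nonneg_left hVle hβ₂0
    have h2 : (1 - β₂) * g0 ^ 2 ≤ (1 - β₂) * G ^ 2 :=
      mul_le_mul_of_nonneg_left hg2 (by linarith)
    rw [hD2_def]
    have h3 : β₂ * ((1 - β₂ ^ m) * G ^ 2) + (1 - β₂) * G ^ 2 = (1 - β₂ ^ (m + 1)) * G ^ 2 := by
      ring
    linarith [h1, h2]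
  set vt := (β₂ * V + (1 - β₂) * g0 ^ 2) / D2 with hvt_def
  have hvtnn : 0 ≤ vt := div_nonneg hvh_nn hD2.le
  have hvtle : vt ≤ G ^ 2 := by
    rw [hvt_def, div_le_iff₀ hD2]
    linarith
  set sv := Real.sqrt (vt + ε) with hsv_def
  have hsv : 0 < sv := Real.sqrt_pos.mpr (by linarith)
  have hsvsG : sv ≤ sG := Real.sqrt_le_sqrt (by linarith)
  set A := α₂ * g0 / sg with hA_def
  set B := wB - w with hB_def
  have hwAw : wA - w = -A := by rw [hwA, hA_def]; ring
  have hBeq : B = -(α₂ * (mh / D1) / sv) := by rw [hB_def, hwB]; ring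
  have habsA : |A| = α₂ * |g0| / sg := by
    rw [hA_def, abs_div, abs_mul, abs_of_pos hα₂, abs_of_pos hsg]
  have habsB : |B| = α₂ * |mh| / (D1 * sv) := by
    rw [hBeq, abs_neg, abs_div, abs_mul, abs_div, abs_of_pos hα₂, abs_of_pos hD1,
      abs_of_pos hsv]
    field_simp
  have f1 : 2 * |g0| ≤ L * |A| := by
    rw [habsA, show L * (α₂ * |g0| / sg) = L * α₂ * |g0| / sg by ring, le_div_iff₀ hsg]
    have h1 : 2 * sG * |g0| ≤ L * α₂ * |g0| := mul_le_mul_of_nonneg_right hB (abs_nonneg g0)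
    linarith [mul_le_mul_of_nonneg_right hsgsG (abs_nonneg g0)]
  have f2 : L * |A| ≤ c * |B| := by
    rw [habsA, habsB,
      show L * (α₂ * |g0| / sg) = L * α₂ * |g0| / sg by ring,
      show c * (α₂ * |mh| / (D1 * sv)) = c * α₂ * |mh| / (D1 * sv) by ring,
      div_le_div_iff₀ hsg (by positivity)]
    have key : L * α₂ * |g0| * (D1 * sv) * se ≤ c * α₂ * |mh| * sg * se := by
      have s1 : sv * se ≤ sG * sg := mul_le_mul hsvsG hsesg hse.le hsG.le
      have t1 : L * α₂ * |g0| * (D1 * sv) * se ≤ L * α₂ * |g0| * D1 * (sG * sg) := by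
        linarith [mul_le_mul_of_nonneg_left s1 (by positivity : (0:ℝ) ≤ L * α₂ * |g0| * D1)]
      have t2 : α₂ * |g0| * sg * (L * (D1 * sG)) ≤ α₂ * |g0| * sg * ((2 * β₁ - 1) * se * c) :=
        mul_le_mul_of_nonneg_left hC' (by positivity)
      have t3 : c * α₂ * sg * se * ((2 * β₁ - 1) * |g0|) ≤ c * α₂ * sg * se * |mh| :=
        mul_le_mul_of_nonneg_left hmh (by positivity)
      linarith [t1, t2, t3]
    exact le_of_mul_le_mul_right key hse
  have hlip : ∀ x y : ℝ, |deriv F x - deriv F y| ≤ L * |x - y| := by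
    intro x y
    have h := hFlip.dist_le_mul x y
    rw [Real.dist_eq, Real.dist_eq, Real.coe_toNNReal L hL0.le] at h
    exact h
  have hup := smooth_upper_aux F L hL0.le hFdiff hlip w wA
  have hlo := strong_lower_aux F c hFdiff hFsc w wB
  rw [← hg0, hwAw] at hup
  rw [← hg0, ← hB_def] at hlo
  have hg0A : g0 * A = |g0| * |A| := by
    have h1 : g0 * A = α₂ * g0 ^ 2 / sg := by rw [hA_def]; ring
    have h2 : |g0| * |A| = α₂ * g0 ^ 2 / sg := by rw [habsA, ← sq_abs g0]; ring
    rw [h1, h2]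
  have hg0B : -(|g0| * |B|) ≤ g0 * B := by
    have h := neg_abs_le (g0 * B)
    rwa [abs_mul] at h
  have hA2 : (-A) ^ 2 = |A| ^ 2 := by rw [neg_pow, ← sq_abs A]; ring
  have hB2 : B ^ 2 = |B| ^ 2 := (sq_abs B).symm
  have key2 : L / 2 * |A| ^ 2 - |g0| * |A| ≤ c / 2 * |B| ^ 2 - |g0| * |B| :=
    final_algebra_aux c L |g0| |A| |B| hc hcL (abs_nonneg g0) (abs_nonneg A) (abs_nonneg B) f1 f2
  have e1 : g0 * -A = -(|g0| * |A|) := by rw [← hg0A]; ring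
  rw [e1, hA2] at hup
  rw [hB2] at hlo
  clear_value g0 se sg sG D1 D2 mh vt sv A B
  have hlo2 : F w - |g0| * |B| + c / 2 * |B| ^ 2 ≤ F wB := by linarith only [hlo, hg0B]
  linarith only [hup, key2, hlo2]
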